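/- Let C be a finite set, Σ a finite submonoid of maps C → C, and B ⊆ C a block (σ(B) ⊆ B for all σ ∈ Σ). Suppose Σ is generated by a set Π, and there is a subset Θ ⊆ Π such that θ(B) = B for all θ ∈ Θ, and every point q ∈ C is mapped into B by some finite composition of elements of Θ. Then B is a projection block, i.e. there exists κ ∈ Σ with κ(C) = B and κ(B) = B. -/

import Mathlib

/-- If `B` is a block for a finite monoid `S ⊆ C^C` generated by `Π`, and there is
a subset `Θ ⊆ Π` whose elements restrict to bijections of `B` (`θ(B) = B`) and whose
finite compositions map every point of `C` into `B`, then `B` is a projection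
block: there exists `κ ∈ S` with `κ(C) = B` and `κ(B) = B`. -/
theorem projection_block_criterion {C : Type*} [Fintype C]
    (S : Submonoid (Function.End C)) (B : Set C)
    (hblock : ∀ σ ∈ S, σ '' B ⊆ B)
    (P : Set (Function.End C)) (hgen : Submonoid.closure P = S)
    (T : Set (Function.End C)) (hTP : T ⊆ P)
    (hTB : ∀ θ ∈ T, θ '' B = B)
    (hreach : ∀ q : C, ∃ L : List (Function.End C),
      (∀ θ ∈ L, θ ∈ T) ∧ L.prod q ∈ B) :
    ∃ κ ∈ S, κ '' Set.univ = B ∧ κ '' B = B := by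
  classical
  -- products of elements of T map B onto B
  have hprodB : ∀ L : List (Function.End C), (∀ θ ∈ L, θ ∈ T) → L.prod '' B = B := by
    intro L
    induction L with
    | nil => intro _; rw [List.prod_nil]; exact Set.image_id B
    | cons a l ih =>
      intro h
      have ha : a ∈ T := h a List.mem_cons_self
      have hl : ∀ θ ∈ l, θ ∈ T := fun θ hθ => h θ (List.mem_cons_of_mem a hθ)
      have : (a * l.prod) '' B = a '' (l.prod '' B) := by
        exact Set.image_comp a l.prod B
      rw [List.prod_cons, this, ih hl, hTB a ha]
  have key : ∀ A : Finset C, ∃ κ ∈ Submonoid.closure T,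
      (∀ q ∈ A, κ q ∈ B) ∧ κ '' B = B := by
    intro A
    induction A using Finset.induction with
    | empty =>
      refine ⟨1, one_mem _, fun q hq => absurd hq (Finset.notMem_empty q), Set.image_id B⟩
    | @insert q A hq ih =>
      obtain ⟨κ, hκmem, hκA, hκB⟩ := ih
      obtain ⟨L, hLT, hLq⟩ := hreach (κ q)
      refine ⟨L.prod * κ, mul_mem (list_prod_mem (fun θ hθ => Submonoid.subset_closure (hLT θ hθ))) hκmem, ?_, ?_⟩
      · intro p hp
        rcases Finset.mem_insert.mp hp with h | h
        · subst h; exact hLq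
        · have : κ p ∈ B := hκA p h
          have : L.prod (κ p) ∈ L.prod '' B := ⟨κ p, this, rfl⟩
          rwa [hprodB L hLT] at this
      · have : (L.prod * κ) '' B = L.prod '' (κ '' B) := by
          exact Set.image_comp L.prod κ B
        rw [this, hκB, hprodB L hLT]
  obtain ⟨κ, hκmem, hκA, hκB⟩ := key Finset.univ
  have hκS : κ ∈ S := by
    rw [← hgen]
    exact Submonoid.closure_mono hTP hκmem
  refine ⟨κ, hκS, ?_, hκB⟩
  apply Set.Subset.antisymm
  · rintro _ ⟨p, -, rfl⟩; exact hκA p (Finset.mem_univ p)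
  · rw [← hκB]; exact Set.image_mono (Set.subset_univ B)
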